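/- (Fatou's example, non-integrability) Let \xi(x) = \sum_{k=1}^\infty sin(kx)/log(k+1) (the series converges for every real x). Then \xi is not Lebesgue integrable on [0, \pi] (hence not on [-\pi, \pi]). Consequently the everywhere convergent trigonometric series \sum_{k=1}^\infty sin(kx)/log(k+1) has a sum that is not Lebesgue integrable. -/

import Mathlib

open Filter Topology Finset Real MeasureTheory

private lemma tele (g : ℕ → ℝ) (m n : ℕ) (h : m ≤ n) :
    ∑ k ∈ Finset.Ioc m n, (g k - g (k + 1)) = g (m + 1) - g (n + 1) := by
  induction n, h using Nat.le_induction with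
  | base => simp
  | succ n hn ih => rw [Finset.sum_Ioc_succ_top (by omega), ih]; ring

private lemma abel_identity (a b : ℕ → ℝ) (m n : ℕ) (h : m ≤ n) :
    ∑ k ∈ Finset.Ioc m n, a k * b k
      = (∑ k ∈ Finset.Ioc m n, (∑ j ∈ Finset.Ioc m k, a j) * (b k - b (k + 1)))
        + (∑ j ∈ Finset.Ioc m n, a j) * b (n + 1) := by
  induction n, h using Nat.le_induction with
  | base => simp
  | succ n hn ih =>
    rw [Finset.sum_Ioc_succ_top (by omega), Finset.sum_Ioc_succ_top (by omega),
      Finset.sum_Ioc_succ_top (by omega), ih]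
    ring

private lemma abel_le (a b : ℕ → ℝ) (m n : ℕ) (M : ℝ)
    (hb0 : ∀ k, m < k → 0 ≤ b k) (hbm : ∀ k, m < k → b (k + 1) ≤ b k)
    (hA : ∀ k, |∑ j ∈ Finset.Ioc m k, a j| ≤ M) :
    |∑ k ∈ Finset.Ioc m n, a k * b k| ≤ M * b (m + 1) := by
  have hM : 0 ≤ M := le_trans (abs_nonneg _) (hA m)
  rcases le_or_gt n m with hnm | hmn
  · rw [Finset.Ioc_eq_empty (by omega)]
    simpa using mul_nonneg hM (hb0 (m + 1) (by omega))
  rw [abel_identity a b m n hmn.le]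
  have h1 : |∑ k ∈ Finset.Ioc m n, (∑ j ∈ Finset.Ioc m k, a j) * (b k - b (k + 1))|
      ≤ ∑ k ∈ Finset.Ioc m n, M * (b k - b (k + 1)) := by
    refine (Finset.abs_sum_le_sum_abs _ _).trans (Finset.sum_le_sum fun k hk => ?_)
    have hk' := (Finset.mem_Ioc.mp hk).1
    rw [abs_mul, abs_of_nonneg (sub_nonneg.mpr (hbm k hk'))]
    exact mul_le_mul_of_nonneg_right (hA k) (sub_nonneg.mpr (hbm k hk'))
  calc |_ + _| ≤ |∑ k ∈ Finset.Ioc m n, (∑ j ∈ Finset.Ioc m k, a j) * (b k - b (k + 1))|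
        + |(∑ j ∈ Finset.Ioc m n, a j) * b (n + 1)| := abs_add_le _ _
    _ ≤ (∑ k ∈ Finset.Ioc m n, M * (b k - b (k + 1))) + M * b (n + 1) := by
        refine add_le_add h1 ?_
        rw [abs_mul, abs_of_nonneg (hb0 (n + 1) (by omega))]
        exact mul_le_mul_of_nonneg_right (hA n) (hb0 (n + 1) (by omega))
    _ = M * b (m + 1) := by
        rw [← Finset.mul_sum, tele b m n hmn.le]; ring

private lemma tele' (g : ℕ → ℝ) (m n : ℕ) (h : m ≤ n) :
    ∑ k ∈ Finset.Ioc m n, (g k - g (k + 1)) = g (m + 1) - g (n + 1) := by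
  induction n, h using Nat.le_induction with
  | base => simp
  | succ n hn ih => rw [Finset.sum_Ioc_succ_top (by omega), ih]; ring

private lemma sin_half_pos {t : ℝ} (ht0 : 0 < t) (htπ : t ≤ π) : 0 < Real.sin (t / 2) := by
  have := Real.pi_pos
  exact Real.sin_pos_of_pos_of_lt_pi (by linarith) (by linarith)

private lemma sin_sum_bound {t : ℝ} (ht0 : 0 < t) (htπ : t ≤ π) (m n : ℕ) :
    |∑ k ∈ Finset.Ioc m n, Real.sin (k * t)| ≤ 1 / Real.sin (t / 2) := by
  have hs := sin_half_pos ht0 htπ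
  rcases le_or_gt n m with hnm | hmn
  · rw [Finset.Ioc_eq_empty (by omega)]; simp; positivity
  have key : (2 * Real.sin (t / 2)) * ∑ k ∈ Finset.Ioc m n, Real.sin (k * t)
      = Real.cos (((m + 1 : ℕ) : ℝ) * t - t / 2) - Real.cos (((n + 1 : ℕ) : ℝ) * t - t / 2) := by
    rw [Finset.mul_sum, ← tele' (fun k => Real.cos (k * t - t / 2)) m n hmn.le]
    refine Finset.sum_congr rfl fun k _ => ?_
    have h1 : ((k : ℝ) + 1) * t - t / 2 = (k * t - t / 2) + t := by ring
    push_cast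
    have e1 : Real.sin t = 2 * Real.sin (t / 2) * Real.cos (t / 2) := by
      rw [show t = 2 * (t / 2) by ring, Real.sin_two_mul]; ring_nf
    have e2 : Real.cos t = 1 - 2 * Real.sin (t / 2) ^ 2 := by
      have h := Real.sin_sq_eq_half_sub (t / 2)
      rw [show 2 * (t / 2) = t by ring] at h; linarith
    rw [h1, Real.cos_add, Real.cos_sub, Real.sin_sub, e1, e2]
    linear_combination (-2 * Real.sin ((k : ℝ) * t) * Real.sin (t / 2)) * Real.sin_sq_add_cos_sq (t / 2)
  have h2 : |(2 * Real.sin (t / 2)) * ∑ k ∈ Finset.Ioc m n, Real.sin (k * t)| ≤ 2 := by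
    rw [key]
    calc |_| ≤ |Real.cos (((m + 1 : ℕ) : ℝ) * t - t / 2)| + |Real.cos (((n + 1 : ℕ) : ℝ) * t - t / 2)| := abs_sub _ _
      _ ≤ 1 + 1 := add_le_add (Real.abs_cos_le_one _) (Real.abs_cos_le_one _)
      _ = 2 := by norm_num
  rw [abs_mul, abs_of_pos (by positivity)] at h2
  rw [le_div_iff₀ hs]
  nlinarith [abs_nonneg (∑ k ∈ Finset.Ioc m n, Real.sin (k * t))]

private lemma cos_sum_bound {t : ℝ} (ht0 : 0 < t) (htπ : t ≤ π) (m n : ℕ) :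
    |∑ k ∈ Finset.Ioc m n, Real.cos (k * t)| ≤ 1 / Real.sin (t / 2) := by
  have hs := sin_half_pos ht0 htπ
  rcases le_or_gt n m with hnm | hmn
  · rw [Finset.Ioc_eq_empty (by omega)]; simp; positivity
  have key : (2 * Real.sin (t / 2)) * ∑ k ∈ Finset.Ioc m n, Real.cos (k * t)
      = -(Real.sin (((m + 1 : ℕ) : ℝ) * t - t / 2) - Real.sin (((n + 1 : ℕ) : ℝ) * t - t / 2)) := by
    rw [Finset.mul_sum, ← tele' (fun k => Real.sin (k * t - t / 2)) m n hmn.le]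
    rw [← Finset.sum_neg_distrib]
    refine Finset.sum_congr rfl fun k _ => ?_
    have h1 : ((k : ℝ) + 1) * t - t / 2 = (k * t - t / 2) + t := by ring
    push_cast
    have e1 : Real.sin t = 2 * Real.sin (t / 2) * Real.cos (t / 2) := by
      rw [show t = 2 * (t / 2) by ring, Real.sin_two_mul]; ring_nf
    have e2 : Real.cos t = 1 - 2 * Real.sin (t / 2) ^ 2 := by
      have h := Real.sin_sq_eq_half_sub (t / 2)
      rw [show 2 * (t / 2) = t by ring] at h; linarith
    rw [h1, Real.sin_add, Real.sin_sub, Real.cos_sub, e1, e2]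
    linear_combination (-2 * Real.cos ((k : ℝ) * t) * Real.sin (t / 2)) * Real.sin_sq_add_cos_sq (t / 2)
  have h2 : |(2 * Real.sin (t / 2)) * ∑ k ∈ Finset.Ioc m n, Real.cos (k * t)| ≤ 2 := by
    rw [key, abs_neg]
    calc |_| ≤ |Real.sin (((m + 1 : ℕ) : ℝ) * t - t / 2)| + |Real.sin (((n + 1 : ℕ) : ℝ) * t - t / 2)| := abs_sub _ _
      _ ≤ 1 + 1 := add_le_add (Real.abs_sin_le_one _) (Real.abs_sin_le_one _)
      _ = 2 := by norm_num
  rw [abs_mul, abs_of_pos (by positivity)] at h2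
  rw [le_div_iff₀ hs]
  nlinarith [abs_nonneg (∑ k ∈ Finset.Ioc m n, Real.cos (k * t))]

private noncomputable def cc (k : ℕ) : ℝ := 1 / (k * Real.log (k + 1))

private lemma cc_nonneg (k : ℕ) : 0 ≤ cc k := by
  unfold cc
  have : 0 ≤ Real.log (k + 1) := Real.log_nonneg (by exact_mod_cast Nat.le_add_left 1 k)
  positivity

private lemma cc_anti {j k : ℕ} (hj : 0 < j) (hjk : j ≤ k) : cc k ≤ cc j := by
  unfold cc
  have h1 : (0 : ℝ) < j := by exact_mod_cast hj
  have h2 : (0 : ℝ) < Real.log (j + 1) := Real.log_pos (by exact_mod_cast by omega)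
  have h3 : Real.log (j + 1) ≤ Real.log (k + 1) := by
    apply Real.log_le_log (by positivity)
    exact_mod_cast by omega
  apply one_div_le_one_div_of_le (by positivity)
  apply mul_le_mul (by exact_mod_cast hjk) h3 h2.le (by positivity)

private lemma cc_not_summable : ¬ Summable cc := by
  intro hsum
  have hcond := (summable_condensed_iff_of_nonneg cc_nonneg
    (fun m n hm hmn => cc_anti hm hmn)).mpr hsum
  have h1 : Summable (fun n : ℕ => 1 / Real.log ((2 : ℝ) ^ n + 1)) := by
    refine hcond.congr fun n => ?_
    unfold cc
    push_cast
    have h20 : (0 : ℝ) < 2 ^ n := by positivity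
    field_simp
  have h2 : Summable (fun n : ℕ => 1 / (((n : ℝ) + 1) * Real.log 2)) := by
    refine h1.of_nonneg_of_le (fun n => by positivity) fun n => ?_
    have hp : (1 : ℝ) ≤ 2 ^ n := one_le_pow₀ (by norm_num)
    have hl : (0 : ℝ) < Real.log ((2 : ℝ) ^ n + 1) :=
      Real.log_pos (by linarith)
    apply one_div_le_one_div_of_le hl
    calc Real.log ((2 : ℝ) ^ n + 1) ≤ Real.log ((2 : ℝ) ^ (n + 1)) := by
          apply Real.log_le_log (by positivity)
          rw [pow_succ]; nlinarith
      _ = ((n : ℝ) + 1) * Real.log 2 := by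
          rw [Real.log_pow]; push_cast; ring
  have h3 : Summable (fun n : ℕ => 1 / ((n : ℝ) + 1)) := by
    have := h2.mul_left (Real.log 2)
    refine this.congr fun n => ?_
    have hl2 : (0 : ℝ) < Real.log 2 := Real.log_pos (by norm_num)
    field_simp
  have h4 : Summable (fun n : ℕ => 1 / (n : ℝ)) := by
    rw [← summable_nat_add_iff 1]
    refine h3.congr fun n => ?_
    push_cast; ring
  exact Real.not_summable_one_div_natCast h4

private lemma cc_partial_tendsto :
    Tendsto (fun m : ℕ => ∑ k ∈ Finset.Ioc 0 m, cc k) atTop atTop := by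
  have h0 := (not_summable_iff_tendsto_nat_atTop_of_nonneg cc_nonneg).mp cc_not_summable
  have heq : ∀ m : ℕ, ∑ k ∈ Finset.range (m + 1), cc k = ∑ k ∈ Finset.Ioc 0 m, cc k := by
    intro m
    have : Finset.range (m + 1) = insert 0 (Finset.Ioc 0 m) := by
      ext k; simp [Finset.mem_range, Finset.mem_Ioc]
    rw [this, Finset.sum_insert (by simp)]
    have : cc 0 = 0 := by unfold cc; norm_num
    rw [this, zero_add]
  have h1 := h0.comp (tendsto_add_atTop_nat 1)
  refine h1.congr fun m => ?_
  simp only [Function.comp]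
  exact heq m

private lemma integral_sin_mul {x : ℝ} (hx : x ≤ π) {k : ℕ} (hk : 0 < k) :
    ∫ t in Set.Icc x π, Real.sin (k * t) =
      (Real.cos (k * x) - Real.cos (k * π)) / k := by
  have hk' : (k : ℝ) ≠ 0 := by exact_mod_cast hk.ne'
  rw [MeasureTheory.integral_Icc_eq_integral_Ioc, ← intervalIntegral.integral_of_le hx]
  have hderiv : ∀ t ∈ Set.uIcc x π,
      HasDerivAt (fun u => -Real.cos (k * u) / k) (Real.sin (k * t)) t := by
    intro t _
    have h1 : HasDerivAt (fun u : ℝ => (k : ℝ) * u) k t := by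
      simpa using (hasDerivAt_id t).const_mul (k : ℝ)
    have h2 := (h1.cos).neg.div_const (k : ℝ)
    refine h2.congr_deriv ?_
    field_simp
  rw [intervalIntegral.integral_eq_sub_of_hasDerivAt hderiv
    ((Real.continuous_sin.comp (continuous_const.mul continuous_id)).intervalIntegrable x π)]
  field_simp
  ring

/-- (Fatou's example, non-integrability) The sum `ξ` of the everywhere convergent series
`∑_{k=1}^∞ sin(kx)/log(k+1)` is not Lebesgue integrable on `[0, π]`, and hence not on
`[-π, π]`. -/
theorem fatou_sum_not_lebesgue_integrable (ξ : ℝ → ℝ)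
    (hξ : ∀ x : ℝ, Tendsto
      (fun n : ℕ => ∑ k ∈ Finset.Icc 1 n, Real.sin (k * x) / Real.log (k + 1))
      atTop (𝓝 (ξ x))) :
    ¬ IntegrableOn ξ (Set.Icc 0 π) volume ∧ ¬ IntegrableOn ξ (Set.Icc (-π) π) volume := by
  simp only [show ∀ n : ℕ, Finset.Icc 1 n = Finset.Ioc 0 n from fun n => Finset.Icc_add_one_left_eq_Ioc 0 n] at hξ
  have hπ3 := Real.pi_gt_three
  have main : ¬ IntegrableOn ξ (Set.Icc 0 π) volume := by
    intro h
    have hlog2 : (0 : ℝ) < Real.log 2 := Real.log_pos (by norm_num)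
    set M := ∫ t in Set.Icc 0 π, |ξ t| with hMdef
    have hM0 : 0 ≤ M :=
      MeasureTheory.setIntegral_nonneg measurableSet_Icc fun t _ => abs_nonneg _
    have hcos1 : 0 < Real.cos 1 := Real.cos_pos_of_mem_Ioo ⟨by linarith, by linarith⟩
    obtain ⟨m, hm1, hmS⟩ : ∃ m : ℕ, 1 ≤ m ∧
        (M + (π + 1) / Real.log 2 + 1) / Real.cos 1 ≤ ∑ k ∈ Finset.Ioc 0 m, cc k := by
      obtain ⟨m, h3, h4⟩ := ((cc_partial_tendsto.eventually_ge_atTop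
        ((M + (π + 1) / Real.log 2 + 1) / Real.cos 1)).and (eventually_ge_atTop 1)).exists
      exact ⟨m, h4, h3⟩
    set Sm := ∑ k ∈ Finset.Ioc 0 m, cc k with hSm
    set x : ℝ := 1 / (m + 1) with hxdef
    have hm1' : (1 : ℝ) ≤ (m : ℝ) := by exact_mod_cast hm1
    have hx0 : 0 < x := by rw [hxdef]; positivity
    have hx1 : x ≤ 1 := by
      rw [hxdef, div_le_one (by positivity)]; linarith
    have hxπ : x ≤ π := by linarith
    have hint : IntegrableOn ξ (Set.Icc x π) volume :=
      h.mono_set (Set.Icc_subset_Icc hx0.le le_rfl)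
    set I := ∫ t in Set.Icc x π, ξ t with hI
    have hIbound : I ≤ M := by
      have h1 : |I| ≤ ∫ t in Set.Icc x π, |ξ t| := by
        simpa [Real.norm_eq_abs] using
          MeasureTheory.norm_integral_le_integral_norm (μ := volume.restrict (Set.Icc x π)) ξ
      have h2 : (∫ t in Set.Icc x π, |ξ t|) ≤ M :=
        MeasureTheory.setIntegral_mono_set h.abs
          (Filter.Eventually.of_forall fun t => abs_nonneg _)
          ((Set.Icc_subset_Icc hx0.le le_rfl).eventuallyLE)
      calc I ≤ |I| := le_abs_self _
        _ ≤ M := h1.trans h2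
    -- uniform bound on partial sums
    have hSbound : ∀ t, x ≤ t → t ≤ π → ∀ n : ℕ,
        |∑ k ∈ Finset.Ioc 0 n, Real.sin (k * t) / Real.log (k + 1)|
          ≤ 1 / Real.sin (x / 2) * (1 / Real.log 2) := by
      intro t hxt htπ n
      have ht0 : 0 < t := lt_of_lt_of_le hx0 hxt
      have hb0 : ∀ k : ℕ, 0 < k → (0 : ℝ) ≤ 1 / Real.log (k + 1) := by
        intro k hk
        have : (0 : ℝ) ≤ Real.log (k + 1) := Real.log_nonneg (by exact_mod_cast Nat.le_add_left 1 k)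
        positivity
      have hbm : ∀ k : ℕ, 0 < k → (1 : ℝ) / Real.log (k + 1 + 1) ≤ 1 / Real.log (k + 1) := by
        intro k hk
        have h2 : (0 : ℝ) < Real.log (k + 1) := Real.log_pos (by exact_mod_cast by omega)
        apply one_div_le_one_div_of_le h2
        apply Real.log_le_log (by positivity)
        linarith
      have h1 := abel_le (fun k => Real.sin (k * t)) (fun k => 1 / Real.log (k + 1)) 0 n
        (1 / Real.sin (t / 2)) (fun k hk => hb0 k hk) (fun k hk => by exact_mod_cast hbm k hk)
        (fun k => sin_sum_bound ht0 htπ 0 k)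
      simp only [div_eq_mul_one_div (Real.sin _)] at h1 ⊢
      have h2 : ((0 : ℕ) + 1 + 1 : ℝ) = 2 := by norm_num
      rw [show ((0 : ℕ) + 1 : ℕ) = 1 from rfl] at h1
      have h3 : (1 / Real.sin (t / 2)) * (1 / Real.log ((1 : ℕ) + 1))
          ≤ 1 / Real.sin (x / 2) * (1 / Real.log 2) := by
        have hs1 : Real.sin (x / 2) ≤ Real.sin (t / 2) := by
          apply Real.strictMonoOn_sin.monotoneOn ⟨by linarith, by linarith⟩
            ⟨by linarith, by linarith⟩ (by linarith)
        have hsx := sin_half_pos hx0 hxπ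
        have : 1 / Real.sin (t / 2) ≤ 1 / Real.sin (x / 2) :=
          one_div_le_one_div_of_le hsx hs1
        have hlogterm : (0 : ℝ) ≤ 1 / Real.log ((1 : ℕ) + 1) := by
          norm_num
          positivity
        calc (1 / Real.sin (t / 2)) * (1 / Real.log ((1 : ℕ) + 1))
            ≤ (1 / Real.sin (x / 2)) * (1 / Real.log ((1 : ℕ) + 1)) :=
              mul_le_mul_of_nonneg_right this hlogterm
          _ = 1 / Real.sin (x / 2) * (1 / Real.log 2) := by norm_num
      exact h1.trans h3
    -- dominated convergence
    have hDCT : Tendsto (fun n : ℕ => ∑ k ∈ Finset.Ioc 0 n,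
        ((Real.cos (k * x) - Real.cos (k * π)) / k) / Real.log (k + 1)) atTop (𝓝 I) := by
      have hT : Tendsto (fun n : ℕ => ∫ t in Set.Icc x π,
          ∑ k ∈ Finset.Ioc 0 n, Real.sin (k * t) / Real.log (k + 1)) atTop (𝓝 I) := by
        refine MeasureTheory.tendsto_integral_of_dominated_convergence
          (bound := fun _ => 1 / Real.sin (x / 2) * (1 / Real.log 2)) ?_ ?_ ?_ ?_
        · intro n
          exact (Continuous.aestronglyMeasurable (by
            refine continuous_finset_sum _ fun k _ => ?_
            exact (Real.continuous_sin.comp (continuous_const.mul continuous_id)).div_const _))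
        · exact MeasureTheory.integrableOn_const measure_Icc_lt_top.ne
        · intro n
          rw [MeasureTheory.ae_restrict_iff' measurableSet_Icc]
          exact Filter.Eventually.of_forall fun t ht => by
            rw [Real.norm_eq_abs]; exact hSbound t ht.1 ht.2 n
        · exact Filter.Eventually.of_forall fun t => hξ t
      refine hT.congr fun n => ?_
      rw [MeasureTheory.integral_finset_sum _ (fun k hk => ?_)]
      · refine Finset.sum_congr rfl fun k hk => ?_
        have hk1 : 0 < k := (Finset.mem_Ioc.mp hk).1
        rw [MeasureTheory.integral_div, integral_sin_mul hxπ hk1]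
      · exact ((Real.continuous_sin.comp
          (continuous_const.mul continuous_id)).div_const _).integrableOn_Icc
    -- lower bound for partial sums
    have hlow : ∀ n, m ≤ n →
        Real.cos 1 * Sm - (π + 1) / Real.log 2 ≤ ∑ k ∈ Finset.Ioc 0 n,
          ((Real.cos (k * x) - Real.cos (k * π)) / k) / Real.log (k + 1) := by
      intro n hn
      have hsplitterm : ∑ k ∈ Finset.Ioc 0 n,
          ((Real.cos (k * x) - Real.cos (k * π)) / k) / Real.log (k + 1)
          = (∑ k ∈ Finset.Ioc 0 n, Real.cos (k * x) * cc k)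
            - ∑ k ∈ Finset.Ioc 0 n, Real.cos (k * π) * cc k := by
        rw [← Finset.sum_sub_distrib]
        refine Finset.sum_congr rfl fun k hk => ?_
        unfold cc; ring
      have hE : |∑ k ∈ Finset.Ioc 0 n, Real.cos (k * π) * cc k| ≤ 1 / Real.log 2 := by
        have h1 := abel_le (fun k => Real.cos (k * π)) cc 0 n 1
          (fun k hk => cc_nonneg k) (fun k hk => cc_anti hk (by omega))
          (fun k => by
            have := cos_sum_bound Real.pi_pos le_rfl 0 k
            rwa [show π / 2 = π / 2 from rfl, Real.sin_pi_div_two, div_one] at this)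
        have hcc1 : cc 1 = 1 / Real.log 2 := by unfold cc; norm_num
        rwa [one_mul, hcc1] at h1
      have hsplit : ∑ k ∈ Finset.Ioc 0 n, Real.cos (k * x) * cc k
          = (∑ k ∈ Finset.Ioc 0 m, Real.cos (k * x) * cc k)
            + ∑ k ∈ Finset.Ioc m n, Real.cos (k * x) * cc k :=
        (Finset.sum_Ioc_consecutive _ (Nat.zero_le m) hn).symm
      have hhead : Real.cos 1 * Sm ≤ ∑ k ∈ Finset.Ioc 0 m, Real.cos (k * x) * cc k := by
        rw [hSm, Finset.mul_sum]
        refine Finset.sum_le_sum fun k hk => ?_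
        obtain ⟨hk0, hkm⟩ := Finset.mem_Ioc.mp hk
        have h1 : (k : ℝ) * x ≤ 1 := by
          rw [hxdef, mul_one_div, div_le_one (by positivity)]
          have : (k : ℝ) ≤ (m : ℝ) := Nat.cast_le.mpr hkm
          linarith
        have h2 : 0 ≤ (k : ℝ) * x := by positivity
        exact mul_le_mul_of_nonneg_right
          (Real.cos_le_cos_of_nonneg_of_le_pi h2 (by linarith) h1) (cc_nonneg k)
      have htail : |∑ k ∈ Finset.Ioc m n, Real.cos (k * x) * cc k| ≤ π / Real.log 2 := by
        have h1 := abel_le (fun k => Real.cos (k * x)) cc m n (1 / Real.sin (x / 2))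
          (fun k hk => cc_nonneg k) (fun k hk => cc_anti (by omega) (by omega))
          (fun k => cos_sum_bound hx0 hxπ m k)
        refine h1.trans ?_
        have hsin : x / π ≤ Real.sin (x / 2) := by
          have := Real.mul_le_sin (x := x / 2) (by positivity) (by linarith)
          calc x / π = 2 / π * (x / 2) := by ring
            _ ≤ Real.sin (x / 2) := this
        have hxπpos : 0 < x / π := by positivity
        have h2 : 1 / Real.sin (x / 2) ≤ π / x := by
          have h3 := one_div_le_one_div_of_le hxπpos hsin
          rwa [one_div_div] at h3
        have hccm : cc (m + 1) = 1 / (((m : ℝ) + 1) * Real.log ((m : ℝ) + 2)) := by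
          unfold cc; push_cast
          rw [show ((m : ℝ) + 1 + 1) = (m : ℝ) + 2 by ring]
        have hlogm2 : (0 : ℝ) < Real.log ((m : ℝ) + 2) := Real.log_pos (by linarith)
        calc 1 / Real.sin (x / 2) * cc (m + 1) ≤ (π / x) * cc (m + 1) :=
              mul_le_mul_of_nonneg_right h2 (cc_nonneg _)
          _ = π / Real.log ((m : ℝ) + 2) := by
              rw [hccm, hxdef]
              field_simp
          _ ≤ π / Real.log 2 := by
              apply div_le_div_of_nonneg_left (by linarith) hlog2
              apply Real.log_le_log (by norm_num)
              linarith
      rw [hsplitterm, hsplit]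
      have h5 : -(π / Real.log 2) ≤ ∑ k ∈ Finset.Ioc m n, Real.cos (k * x) * cc k :=
        neg_le_of_abs_le htail
      have h6 : ∑ k ∈ Finset.Ioc 0 n, Real.cos (k * π) * cc k ≤ 1 / Real.log 2 :=
        le_of_abs_le hE
      have h7 : (π + 1) / Real.log 2 = π / Real.log 2 + 1 / Real.log 2 := by ring
      linarith
    have hIlow : Real.cos 1 * Sm - (π + 1) / Real.log 2 ≤ I :=
      ge_of_tendsto hDCT (eventually_atTop.mpr ⟨m, hlow⟩)
    have hfin : M + (π + 1) / Real.log 2 + 1 ≤ Real.cos 1 * Sm := by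
      have := (div_le_iff₀ hcos1).mp hmS
      linarith [this]
    linarith
  refine ⟨main, fun h2 => main (h2.mono_set (Set.Icc_subset_Icc (by linarith) le_rfl))⟩
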